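/- Let K ≥ 2 and T be positive integers with T ≥ 40K, set H := T/(10K) (a real number, so H ≥ 4), define t_0 := 1 and t_i := ⌈√(H·t_{i−1})⌉ for i ≥ 1, and L := ⌊log₂ log₂ H⌋. Define N_main := Σ_{i=1}^{L} ( t_i + (K−1)·Σ_{k=1}^{i} t_k ). Then T/40 ≤ N_main ≤ 3T/5; in particular, 2T/5 ≤ T − N_main ≤ 39T/40. -/

import Mathlib

set_option maxHeartbeats 1000000


open Real Finset

/-- Let `K ≥ 2`, `T ≥ 40K`, `H := T/(10K)` (so `H ≥ 4`), with the integer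
schedule `t_0 = 1`, `t_i = ⌈√(H·t_{i−1})⌉` and `L := ⌊log₂ log₂ H⌋`.  Define
`N_main := Σ_{i=1}^{L} ( t_i + (K−1)·Σ_{k=1}^{i} t_k )`.
Then `T/40 ≤ N_main ≤ 3T/5`; in particular `2T/5 ≤ T − N_main ≤ 39T/40`. -/
theorem stmt19_round_budget (K T : ℕ) (hK : 2 ≤ K) (hT : 40 * K ≤ T)
    (H : ℝ) (hH : H = (T : ℝ) / (10 * K))
    (t : ℕ → ℕ) (ht0 : t 0 = 1)
    (ht : ∀ i : ℕ, 1 ≤ i → t i = ⌈Real.sqrt (H * t (i - 1))⌉₊)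
    (L : ℕ) (hL : L = ⌊Real.logb 2 (Real.logb 2 H)⌋₊)
    (Nmain : ℕ)
    (hN : Nmain = ∑ i ∈ Icc 1 L, (t i + (K - 1) * ∑ k ∈ Icc 1 i, t k)) :
    ((T : ℝ) / 40 ≤ (Nmain : ℝ) ∧ (Nmain : ℝ) ≤ 3 * T / 5) ∧
    (2 * (T : ℝ) / 5 ≤ (T : ℝ) - (Nmain : ℝ) ∧ (T : ℝ) - (Nmain : ℝ) ≤ 39 * T / 40) := by
  have hKR : (2:ℝ) ≤ (K:ℝ) := by exact_mod_cast hK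
  have hKpos : (0:ℝ) < (K:ℝ) := by linarith
  have hTK : (40:ℝ) * (K:ℝ) ≤ (T:ℝ) := by exact_mod_cast hT
  have hH4 : (4:ℝ) ≤ H := by
    rw [hH, le_div_iff₀ (by positivity)]; linarith
  have hHpos : (0:ℝ) < H := by linarith
  have hH1 : (1:ℝ) ≤ H := by linarith
  have hKH : (K:ℝ) * H = (T:ℝ) / 10 := by
    rw [hH]; field_simp
  have h12 : (1:ℝ) < 2 := one_lt_two
  -- g := logb 2 H
  obtain ⟨g, hg⟩ : ∃ g : ℝ, Real.logb 2 H = g := ⟨_, rfl⟩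
  rw [hg] at hL
  have hg2 : (2:ℝ) ≤ g := by
    rw [← hg, Real.le_logb_iff_rpow_le h12 hHpos]
    rw [show (2:ℝ) = ((2:ℕ):ℝ) by norm_num, Real.rpow_natCast]
    norm_num; linarith
  have hgpos : (0:ℝ) < g := by linarith
  have hgg1 : (1:ℝ) ≤ Real.logb 2 g := by
    rw [Real.le_logb_iff_rpow_le h12 hgpos, Real.rpow_one]; linarith
  have hL1 : 1 ≤ L := by
    rw [hL]
    exact Nat.le_floor (by exact_mod_cast hgg1)
  have hgL : (2:ℝ)^L ≤ g := by
    have h1 : (L:ℝ) ≤ Real.logb 2 g := by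
      rw [hL]; push_cast
      exact Nat.floor_le (by linarith)
    have h2 : (2:ℝ) ^ (L:ℝ) ≤ (2:ℝ) ^ (Real.logb 2 g) :=
      Real.rpow_le_rpow_of_exponent_le (by norm_num) h1
    rwa [Real.rpow_logb (by norm_num) (by norm_num) hgpos, Real.rpow_natCast] at h2
  have hgU : g < (2:ℝ)^(L+1) := by
    have h1 : Real.logb 2 g < ((L+1 : ℕ):ℝ) := by
      rw [hL]; push_cast
      exact Nat.lt_floor_add_one _
    rw [Real.logb_lt_iff_lt_rpow h12 hgpos, Real.rpow_natCast] at h1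
    exact_mod_cast h1
  have H2g : (2:ℝ) ^ g = H := by
    rw [← hg]; exact Real.rpow_logb (by norm_num) (by norm_num) hHpos
  -- lower bound on t i
  have low : ∀ i : ℕ, H ^ ((1:ℝ) - (1/2:ℝ)^i) ≤ (t i : ℝ) := by
    intro i
    induction i with
    | zero => simp [ht0]
    | succ n ih =>
      have h1 : t (n+1) = ⌈Real.sqrt (H * t n)⌉₊ := by
        rw [ht (n+1) (by omega)]; norm_num
      rw [h1]
      refine le_trans ?_ (Nat.le_ceil _)
      have h3 : H * H ^ ((1:ℝ) - (1/2:ℝ)^n) ≤ H * t n :=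
        mul_le_mul_of_nonneg_left ih hHpos.le
      refine le_trans (le_of_eq ?_) (Real.sqrt_le_sqrt h3)
      have e1 : H * H ^ ((1:ℝ) - (1/2:ℝ)^n) = H ^ ((1:ℝ) + ((1:ℝ) - (1/2:ℝ)^n)) := by
        rw [Real.rpow_add hHpos, Real.rpow_one]
      rw [e1, Real.sqrt_eq_rpow, ← Real.rpow_mul hHpos.le]
      congr 1
      rw [pow_succ]; ring
  -- upper bound on t i
  have up : ∀ i : ℕ, 1 ≤ i → (t i : ℝ) ≤ 2 * H ^ ((1:ℝ) - (1/2:ℝ)^i) := by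
    have hsH : (2:ℝ) ≤ Real.sqrt H := by
      nlinarith [Real.sq_sqrt hHpos.le, Real.sqrt_nonneg H]
    intro i hi
    induction i, hi using Nat.le_induction with
    | base =>
      have h1 : t 1 = ⌈Real.sqrt (H * t 0)⌉₊ := by rw [ht 1 (by omega)]
      have h2 : (⌈Real.sqrt (H * t 0)⌉₊ : ℝ) < Real.sqrt (H * t 0) + 1 :=
        Nat.ceil_lt_add_one (Real.sqrt_nonneg _)
      rw [ht0] at h2
      simp only [Nat.cast_one, mul_one] at h2
      have e1 : (2:ℝ) * H ^ ((1:ℝ) - (1/2:ℝ)^1) = 2 * Real.sqrt H := by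
        rw [Real.sqrt_eq_rpow]; norm_num
      rw [h1, e1]
      have : (⌈Real.sqrt (H * t 0)⌉₊ : ℝ) = (⌈Real.sqrt (H * 1)⌉₊ : ℝ) := by rw [ht0]; norm_num
      rw [this]
      have h3 : (⌈Real.sqrt (H * 1)⌉₊ : ℝ) < Real.sqrt H + 1 := by
        rw [mul_one]; exact Nat.ceil_lt_add_one (Real.sqrt_nonneg _)
      linarith
    | succ n hn ih =>
      have h1 : t (n+1) = ⌈Real.sqrt (H * t n)⌉₊ := by
        rw [ht (n+1) (by omega)]; norm_num
      have h2 : (⌈Real.sqrt (H * t n)⌉₊ : ℝ) < Real.sqrt (H * t n) + 1 :=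
        Nat.ceil_lt_add_one (Real.sqrt_nonneg _)
      set X := H ^ ((1:ℝ) - (1/2:ℝ)^(n+1)) with hX
      have hXs : Real.sqrt (H * t n) ≤ Real.sqrt 2 * X := by
        have h3 : H * t n ≤ 2 * (H ^ ((1:ℝ) + ((1:ℝ) - (1/2:ℝ)^n))) := by
          have := mul_le_mul_of_nonneg_left ih hHpos.le
          rw [Real.rpow_add hHpos, Real.rpow_one]
          linarith
        refine le_trans (Real.sqrt_le_sqrt h3) (le_of_eq ?_)
        rw [Real.sqrt_mul (by norm_num), hX]
        congr 1
        rw [Real.sqrt_eq_rpow, ← Real.rpow_mul hHpos.le]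
        congr 1
        rw [pow_succ]; ring
      have hX2 : (2:ℝ) ≤ X := by
        have h4 : Real.sqrt H = H ^ ((1:ℝ)/2) := Real.sqrt_eq_rpow H
        have h5 : H ^ ((1:ℝ)/2) ≤ X := by
          rw [hX]
          apply Real.rpow_le_rpow_of_exponent_le hH1
          have : (1/2:ℝ)^(n+1) ≤ (1/2:ℝ)^1 :=
            pow_le_pow_of_le_one (by norm_num) (by norm_num) (by omega)
          simp only [pow_one] at this
          linarith
        linarith [hsH, h4 ▸ h5]
      have hs2 : Real.sqrt 2 ≤ 3/2 := by
        nlinarith [Real.sq_sqrt (by norm_num : (0:ℝ) ≤ 2), Real.sqrt_nonneg 2]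
      have hXnn : (0:ℝ) ≤ X := Real.rpow_nonneg hHpos.le _
      rw [h1]
      nlinarith [h2, hXs]
  -- per-index bound for k ≤ L
  have tkb : ∀ k : ℕ, 1 ≤ k → k ≤ L → (t k : ℝ) ≤ 2 * H * (1/2:ℝ)^(L+1-k) := by
    intro k hk1 hkL
    have hc : (0:ℝ) ≤ (1/2:ℝ)^k := by positivity
    -- 2^(L+1-k) ≤ H^((1/2)^k)
    have step1 : (2:ℝ)^(L+1-k) ≤ H ^ ((1/2:ℝ)^k) := by
      have hpow : ((L+1-k : ℕ):ℝ) ≤ (2:ℝ)^(L-k) := by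
        have h1 : L + 1 - k ≤ 2^(L-k) := by
          have := Nat.lt_two_pow_self (n := L-k)
          omega
        calc ((L+1-k : ℕ):ℝ) ≤ ((2^(L-k) : ℕ):ℝ) := by exact_mod_cast h1
          _ = (2:ℝ)^(L-k) := by push_cast; ring
      have h2k : (2:ℝ)^(L-k) = (2:ℝ)^L * (1/2:ℝ)^k := by
        rw [one_div, inv_pow, eq_mul_inv_iff_mul_eq₀ (by positivity), ← pow_add]
        congr 1; omega
      have h3 : ((L+1-k : ℕ):ℝ) ≤ g * (1/2:ℝ)^k := by
        have := mul_le_mul_of_nonneg_right hgL hc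
        rw [h2k] at hpow
        linarith
      calc (2:ℝ)^(L+1-k) = (2:ℝ) ^ (((L+1-k : ℕ):ℝ)) := by rw [Real.rpow_natCast]
        _ ≤ (2:ℝ) ^ (g * (1/2:ℝ)^k) := Real.rpow_le_rpow_of_exponent_le (by norm_num) h3
        _ = ((2:ℝ) ^ g) ^ ((1/2:ℝ)^k) := Real.rpow_mul (by norm_num) _ _
        _ = H ^ ((1/2:ℝ)^k) := by rw [H2g]
    have hup := up k hk1
    have e1 : H ^ ((1:ℝ) - (1/2:ℝ)^k) = H / H ^ ((1/2:ℝ)^k) := by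
      rw [Real.rpow_sub hHpos, Real.rpow_one]
    have hpos2 : (0:ℝ) < (2:ℝ)^(L+1-k) := by positivity
    have h4 : H / H ^ ((1/2:ℝ)^k) ≤ H / (2:ℝ)^(L+1-k) :=
      div_le_div_of_nonneg_left hHpos.le hpos2 step1
    have e2 : H / (2:ℝ)^(L+1-k) = H * (1/2:ℝ)^(L+1-k) := by
      rw [div_pow, one_pow, div_eq_mul_inv, ← one_div]
    calc (t k : ℝ) ≤ 2 * H ^ ((1:ℝ) - (1/2:ℝ)^k) := hup
      _ = 2 * (H / H ^ ((1/2:ℝ)^k)) := by rw [e1]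
      _ ≤ 2 * (H * (1/2:ℝ)^(L+1-k)) := by rw [← e2]; linarith
      _ = 2 * H * (1/2:ℝ)^(L+1-k) := by ring
  -- partial sum bound
  have Sb : ∀ i : ℕ, i ≤ L → (∑ k ∈ Icc 1 i, (t k : ℝ)) ≤ 2 * H * (1/2:ℝ)^(L-i) := by
    intro i
    induction i with
    | zero => intro _; simp; positivity
    | succ n ih =>
      intro hn
      rw [Finset.sum_Icc_succ_top (by omega : 1 ≤ n+1)]
      have h1 := ih (by omega)
      have h2 := tkb (n+1) (by omega) hn
      rw [show L - n = (L - (n+1)) + 1 by omega, pow_succ] at h1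
      rw [show L + 1 - (n+1) = (L - (n+1)) + 1 by omega, pow_succ] at h2
      have hp : (0:ℝ) ≤ (1/2:ℝ)^(L-(n+1)) := by positivity
      nlinarith [h1, h2]
  -- total bound
  have Tb : ∀ n : ℕ, n ≤ L →
      (∑ i ∈ Icc 1 n, (∑ k ∈ Icc 1 i, (t k : ℝ))) ≤ 4 * H * (1/2:ℝ)^(L-n) := by
    intro n
    induction n with
    | zero => intro _; simp; positivity
    | succ n ih =>
      intro hn
      rw [Finset.sum_Icc_succ_top (by omega : 1 ≤ n+1)]
      have h1 := ih (by omega)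
      have h2 := Sb (n+1) hn
      rw [show L - n = (L - (n+1)) + 1 by omega, pow_succ] at h1
      nlinarith [h1, h2]
  -- upper bound on Nmain
  have hNle : (Nmain : ℝ) ≤ 4 * (K:ℝ) * H := by
    have h1 : Nmain ≤ ∑ i ∈ Icc 1 L, K * ∑ k ∈ Icc 1 i, t k := by
      rw [hN]
      apply Finset.sum_le_sum
      intro i hi
      have hmem : i ∈ Icc 1 i := Finset.mem_Icc.mpr ⟨(Finset.mem_Icc.mp hi).1, le_rfl⟩
      have hti : t i ≤ ∑ k ∈ Icc 1 i, t k :=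
        Finset.single_le_sum (fun _ _ => Nat.zero_le _) hmem
      have hKe : K = (K-1) + 1 := by omega
      calc t i + (K-1) * ∑ k ∈ Icc 1 i, t k
          ≤ (∑ k ∈ Icc 1 i, t k) + (K-1) * ∑ k ∈ Icc 1 i, t k := by omega
        _ = K * ∑ k ∈ Icc 1 i, t k := by
            conv_rhs => rw [hKe]
            rw [add_mul, one_mul, add_comm]
    have h2 : ((∑ i ∈ Icc 1 L, K * ∑ k ∈ Icc 1 i, t k : ℕ) : ℝ)
        = (K:ℝ) * ∑ i ∈ Icc 1 L, (∑ k ∈ Icc 1 i, (t k : ℝ)) := by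
      push_cast
      rw [Finset.mul_sum]
    have h3 := Tb L le_rfl
    simp only [Nat.sub_self, pow_zero, mul_one] at h3
    have h4 : (Nmain : ℝ) ≤ ((∑ i ∈ Icc 1 L, K * ∑ k ∈ Icc 1 i, t k : ℕ) : ℝ) := by
      exact_mod_cast h1
    rw [h2] at h4
    nlinarith [h3, h4]
  -- lower bound on t L
  have htL : H / 4 ≤ (t L : ℝ) := by
    have h1 := low L
    have hc : H ^ ((1/2:ℝ)^L) ≤ 4 := by
      have h2 : g * (1/2:ℝ)^L ≤ 2 := by
        have hc0 : (0:ℝ) ≤ (1/2:ℝ)^L := by positivity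
        have h3 : g * (1/2:ℝ)^L ≤ (2:ℝ)^(L+1) * (1/2:ℝ)^L :=
          mul_le_mul_of_nonneg_right hgU.le hc0
        have e : (2:ℝ)^(L+1) * (1/2:ℝ)^L = 2 := by
          rw [pow_succ, mul_comm ((2:ℝ)^L) 2, mul_assoc, ← mul_pow]
          norm_num
        linarith [e ▸ h3]
      calc H ^ ((1/2:ℝ)^L) = ((2:ℝ)^g) ^ ((1/2:ℝ)^L) := by rw [H2g]
        _ = (2:ℝ) ^ (g * (1/2:ℝ)^L) := (Real.rpow_mul (by norm_num) _ _).symm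
        _ ≤ (2:ℝ) ^ (2:ℝ) := Real.rpow_le_rpow_of_exponent_le (by norm_num) h2
        _ = 4 := by
            rw [show (2:ℝ) = ((2:ℕ):ℝ) by norm_num, Real.rpow_natCast]
            norm_num
    have e1 : H ^ ((1:ℝ) - (1/2:ℝ)^L) = H / H ^ ((1/2:ℝ)^L) := by
      rw [Real.rpow_sub hHpos, Real.rpow_one]
    have hcpos : (0:ℝ) < H ^ ((1/2:ℝ)^L) := Real.rpow_pos_of_pos hHpos _
    have h5 : H / 4 ≤ H / H ^ ((1/2:ℝ)^L) :=
      div_le_div_of_nonneg_left hHpos.le hcpos hc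
    linarith [e1 ▸ h1]
  -- lower bound on Nmain
  have hNge : (T:ℝ) / 40 ≤ (Nmain : ℝ) := by
    have h1 : K * t L ≤ Nmain := by
      rw [hN]
      have hmem : L ∈ Icc 1 L := Finset.mem_Icc.mpr ⟨hL1, le_rfl⟩
      have htL2 : t L ≤ ∑ k ∈ Icc 1 L, t k :=
        Finset.single_le_sum (fun _ _ => Nat.zero_le _) hmem
      have hKe : K = (K-1) + 1 := by omega
      calc K * t L = t L + (K-1) * t L := by
            conv_lhs => rw [hKe]
            rw [add_mul, one_mul, add_comm]
        _ ≤ t L + (K-1) * ∑ k ∈ Icc 1 L, t k := by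
            have := Nat.mul_le_mul_left (K-1) htL2
            omega
        _ ≤ ∑ i ∈ Icc 1 L, (t i + (K-1) * ∑ k ∈ Icc 1 i, t k) :=
            Finset.single_le_sum (f := fun i => t i + (K-1) * ∑ k ∈ Icc 1 i, t k)
              (fun _ _ => Nat.zero_le _) hmem
    have h2 : ((K : ℕ):ℝ) * (t L : ℝ) ≤ (Nmain : ℝ) := by exact_mod_cast h1
    have h3 : (K:ℝ) * (H / 4) ≤ (K:ℝ) * (t L : ℝ) :=
      mul_le_mul_of_nonneg_left htL hKpos.le
    nlinarith [hKH]
  have hNup : (Nmain : ℝ) ≤ 3 * (T:ℝ) / 5 := by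
    nlinarith [hNle, hKH, hTK]
  refine ⟨⟨hNge, hNup⟩, by linarith, by linarith⟩
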